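/- Let n ≥ 1 be an integer and let u₀ ∈ L¹(ℝⁿ). Set M = ∫_{ℝⁿ} u₀(x) dx. Then the solution u(t,·) = u₀ * G_t of the heat equation with initial datum u₀ satisfies ‖u₀ * G_t − M·G_t‖_{L¹(ℝⁿ)} → 0 as t → ∞. -/

import Mathlib

open MeasureTheory Filter Real
open scoped ENNReal NNReal Topology

/-- The Euclidean heat kernel on `ℝⁿ`: `G_t(x) = (4πt)^{-n/2} exp(-‖x‖²/(4t))`. -/
noncomputable def heatKernel (n : ℕ) (t : ℝ) (x : EuclideanSpace ℝ (Fin n)) : ℝ :=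
  (4 * Real.pi * t) ^ (-(n : ℝ) / 2) * Real.exp (-‖x‖ ^ 2 / (4 * t))

lemma heatKernel_continuous (n : ℕ) (t : ℝ) : Continuous (heatKernel n t) := by
  unfold heatKernel; fun_prop

lemma heatKernel_nonneg (n : ℕ) {t : ℝ} (ht : 0 < t) (x : EuclideanSpace ℝ (Fin n)) :
    0 ≤ heatKernel n t x := by
  apply mul_nonneg _ (Real.exp_nonneg _)
  apply Real.rpow_nonneg
  positivity

lemma heatKernel_le (n : ℕ) {t : ℝ} (ht : 0 < t) (x : EuclideanSpace ℝ (Fin n)) :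
    heatKernel n t x ≤ (4 * Real.pi * t) ^ (-(n : ℝ) / 2) := by
  have : Real.exp (-‖x‖ ^ 2 / (4 * t)) ≤ 1 := by
    rw [Real.exp_le_one_iff]
    have : (0:ℝ) ≤ ‖x‖^2 / (4*t) := by positivity
    rw [neg_div]; linarith
  calc heatKernel n t x ≤ (4 * Real.pi * t) ^ (-(n : ℝ) / 2) * 1 := by
        exact mul_le_mul_of_nonneg_left this (Real.rpow_nonneg (by positivity) _)
    _ = _ := mul_one _

lemma heatKernel_scaling (n : ℕ) {t : ℝ} (ht : 0 < t) (x : EuclideanSpace ℝ (Fin n)) :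
    heatKernel n t x = t ^ (-(n : ℝ) / 2) * heatKernel n 1 ((Real.sqrt t)⁻¹ • x) := by
  unfold heatKernel
  have h4 : (0:ℝ) < 4 * Real.pi := by positivity
  rw [Real.mul_rpow h4.le ht.le]
  have hnorm : ‖(Real.sqrt t)⁻¹ • x‖ ^ 2 = ‖x‖^2 / t := by
    rw [norm_smul]
    have : ‖(Real.sqrt t)⁻¹‖ = (Real.sqrt t)⁻¹ := by
      rw [Real.norm_eq_abs, abs_of_nonneg]; positivity
    rw [this, mul_pow, inv_pow, Real.sq_sqrt ht.le, div_eq_inv_mul, mul_comm]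
  rw [hnorm]
  rw [mul_one]
  ring_nf

lemma gauss_integrable (n : ℕ) {b : ℝ} (hb : 0 < b) :
    Integrable (fun v : EuclideanSpace ℝ (Fin n) => Real.exp (-b * ‖v‖^2)) := by
  have h := GaussianFourier.integrable_cexp_neg_mul_sq_norm_add
    (b := (b:ℂ)) (by simpa using hb) 0 (0 : EuclideanSpace ℝ (Fin n))
  refine h.norm.congr (Filter.Eventually.of_forall fun v => ?_)
  simp only [Complex.norm_exp]
  congr 1
  simp only [Complex.add_re, Complex.neg_re, Complex.mul_re, Complex.ofReal_re,
    Complex.ofReal_im]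
  norm_num
  left; norm_cast

lemma heatKernel_integrable (n : ℕ) : Integrable (heatKernel n 1) := by
  have h2 := gauss_integrable n (b := 1/4) (by norm_num)
  have h3 := h2.const_mul ((4 * Real.pi * 1) ^ (-(n : ℝ) / 2))
  refine h3.congr (Filter.Eventually.of_forall fun v => ?_)
  show _ = heatKernel n 1 v
  rw [heatKernel, show -‖v‖^2/(4*(1:ℝ)) = -(1/4:ℝ)*‖v‖^2 by ring]

lemma sqrt_pow_eq (n : ℕ) {t : ℝ} (ht : 0 < t) :
    Real.sqrt t ^ n = t ^ ((n : ℝ) / 2) := by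
  rw [Real.sqrt_eq_rpow, ← Real.rpow_natCast (t ^ ((1:ℝ)/2)) n, ← Real.rpow_mul ht.le]
  ring_nf

lemma key_cov (n : ℕ) {t : ℝ} (ht : 0 < t) (y : EuclideanSpace ℝ (Fin n)) :
    ∫⁻ x, (‖heatKernel n t (x - y) - heatKernel n t x‖₊ : ℝ≥0∞) ∂volume
      = ∫⁻ z, (‖heatKernel n 1 (z - (Real.sqrt t)⁻¹ • y) - heatKernel n 1 z‖₊ : ℝ≥0∞) ∂volume := by
  have hc : 0 < Real.sqrt t := Real.sqrt_pos.mpr ht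
  set c := Real.sqrt t with hcdef
  set F : EuclideanSpace ℝ (Fin n) → ℝ≥0∞ :=
    fun x => (‖heatKernel n t (x - y) - heatKernel n t x‖₊ : ℝ≥0∞) with hFdef
  have hFm : Measurable F := by
    apply Measurable.coe_nnreal_ennreal
    apply Measurable.nnnorm
    exact ((heatKernel_continuous n t).comp (continuous_id.sub continuous_const)).measurable.sub
      (heatKernel_continuous n t).measurable
  have hk : ENNReal.ofReal (t ^ (-(n:ℝ)/2)) ≠ 0 := by
    simp [ENNReal.ofReal_eq_zero, not_le]
    positivity
  have hk' : ENNReal.ofReal (t ^ (-(n:ℝ)/2)) ≠ ∞ := ENNReal.ofReal_ne_top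
  rw [← ENNReal.mul_right_inj hk hk']
  have hmap : ∫⁻ z, F (c • z) ∂volume
      = ENNReal.ofReal (t ^ (-(n:ℝ)/2)) * ∫⁻ x, F x ∂volume := by
    have h1 : ∫⁻ z, F (c • z) ∂volume = ∫⁻ x, F x ∂(Measure.map (c • ·) volume) :=
      (lintegral_map hFm (measurable_const_smul c)).symm
    rw [h1, Measure.map_addHaar_smul (volume : Measure (EuclideanSpace ℝ (Fin n))) hc.ne',
      lintegral_smul_measure]
    congr 2
    rw [finrank_euclideanSpace_fin, abs_of_nonneg (by positivity), sqrt_pow_eq n ht,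
      ← Real.rpow_neg ht.le, neg_div]
  have hF_smul : ∀ z, F (c • z) = ENNReal.ofReal (t ^ (-(n:ℝ)/2)) *
      (‖heatKernel n 1 (z - (Real.sqrt t)⁻¹ • y) - heatKernel n 1 z‖₊ : ℝ≥0∞) := by
    intro z
    have e1 : c • z - y = c • (z - c⁻¹ • y) := by
      rw [smul_sub, smul_inv_smul₀ hc.ne']
    rw [hFdef]
    simp only
    rw [e1, heatKernel_scaling n ht, heatKernel_scaling n ht (c • z), inv_smul_smul₀ hc.ne',
      hcdef, inv_smul_smul₀ (Real.sqrt_pos.mpr ht).ne', ← mul_sub]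
    rw [nnnorm_mul, ENNReal.coe_mul, show ((‖t ^ (-(n:ℝ)/2)‖₊ : ℝ≥0∞)) = ENNReal.ofReal (t ^ (-(n:ℝ)/2)) from Real.enorm_eq_ofReal (by positivity)]
  calc ENNReal.ofReal (t ^ (-(n:ℝ)/2)) * ∫⁻ x, F x ∂volume
      = ∫⁻ z, F (c • z) ∂volume := hmap.symm
    _ = ENNReal.ofReal (t ^ (-(n:ℝ)/2)) *
        ∫⁻ z, (‖heatKernel n 1 (z - (Real.sqrt t)⁻¹ • y) - heatKernel n 1 z‖₊ : ℝ≥0∞) ∂volume := by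
      simp_rw [hF_smul]
      rw [lintegral_const_mul' _ _ hk']

/-- Continuity of translation in `L¹`. -/
lemma tendsto_translate {n : ℕ} {g : EuclideanSpace ℝ (Fin n) → ℝ} (hg : Integrable g) :
    Tendsto (fun h : EuclideanSpace ℝ (Fin n) =>
        ∫⁻ z, (‖g (z - h) - g z‖₊ : ℝ≥0∞)) (𝓝 0) (𝓝 0) := by
  haveI : Fact ((1:ℝ≥0∞) ≤ 1) := ⟨le_refl _⟩
  have hgm : MemLp g 1 (volume : Measure (EuclideanSpace ℝ (Fin n))) :=
    memLp_one_iff_integrable.mpr hg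
  set F : Lp ℝ 1 (volume : Measure (EuclideanSpace ℝ (Fin n))) := hgm.toLp g with hF
  have hcF : ⇑F =ᵐ[volume] g := hgm.coeFn_toLp
  set T : EuclideanSpace ℝ (Fin n) → C(EuclideanSpace ℝ (Fin n), EuclideanSpace ℝ (Fin n)) :=
    fun h => ⟨fun x => x - h, by fun_prop⟩ with hT
  have hTm : ∀ h : EuclideanSpace ℝ (Fin n), MeasurePreserving (T h) volume volume := fun h =>
    measurePreserving_sub_right volume h
  have hTc : Continuous T := by
    apply ContinuousMap.continuous_of_continuous_uncurry
    exact continuous_snd.sub continuous_fst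
  have h0 : Tendsto (fun h : EuclideanSpace ℝ (Fin n) =>
      Lp.compMeasurePreserving (T h) (hTm h) F) (𝓝 0)
      (𝓝 (Lp.compMeasurePreserving (T 0) (hTm 0) F)) :=
    Filter.Tendsto.compMeasurePreservingLp tendsto_const_nhds (hTc.tendsto 0) hTm (hTm 0)
      (by norm_num)
  have h1 : Tendsto (fun h : EuclideanSpace ℝ (Fin n) =>
      edist (Lp.compMeasurePreserving (T h) (hTm h) F)
      (Lp.compMeasurePreserving (T 0) (hTm 0) F)) (𝓝 0) (𝓝 0) := by
    have := h0.edist (tendsto_const_nhds (x := Lp.compMeasurePreserving (T 0) (hTm 0) F))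
    simpa using this
  refine h1.congr fun h => ?_
  rw [Lp.edist_def, eLpNorm_one_eq_lintegral_enorm]
  have e1 : ⇑(Lp.compMeasurePreserving (T h) (hTm h) F) =ᵐ[volume] fun z => g (z - h) := by
    refine (Lp.coeFn_compMeasurePreserving F (hTm h)).trans ?_
    exact (hTm h).quasiMeasurePreserving.ae_eq_comp hcF
  have e0 : ⇑(Lp.compMeasurePreserving (T 0) (hTm 0) F) =ᵐ[volume] fun z => g z := by
    refine (Lp.coeFn_compMeasurePreserving F (hTm 0)).trans ?_
    refine ((hTm 0).quasiMeasurePreserving.ae_eq_comp hcF).trans ?_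
    filter_upwards with z
    simp [Function.comp, T]
  apply lintegral_congr_ae
  filter_upwards [e1, e0] with z hz1 hz2
  simp only [Pi.sub_apply, hz1, hz2]
  rfl

/-- The theorem for a (strongly) measurable integrable `u₀`. -/
lemma heat_asymptotics_L1_aux (n : ℕ)
    (u₀ : EuclideanSpace ℝ (Fin n) → ℝ) (hu₀ : Integrable u₀) (hmeas : Measurable u₀) :
    Tendsto
      (fun t : ℝ =>
        eLpNorm
          (fun x : EuclideanSpace ℝ (Fin n) =>
            (∫ y, u₀ y * heatKernel n t (x - y)) - (∫ x, u₀ x) * heatKernel n t x)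
          1 volume)
      atTop (nhds 0) := by
  set G : EuclideanSpace ℝ (Fin n) → ℝ := heatKernel n 1 with hG
  set φ : EuclideanSpace ℝ (Fin n) → ℝ≥0∞ :=
    fun h => ∫⁻ z, (‖G (z - h) - G z‖₊ : ℝ≥0∞) with hφ
  have hGm : Measurable G := (heatKernel_continuous n 1).measurable
  set C : ℝ≥0∞ := ∫⁻ z, (‖G z‖₊ : ℝ≥0∞) with hC
  have hC_ne : C ≠ ∞ := (heatKernel_integrable n).hasFiniteIntegral.ne
  have hφ_le : ∀ h, φ h ≤ 2 * C := by
    intro h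
    have : φ h ≤ ∫⁻ z, ((‖G (z - h)‖₊ : ℝ≥0∞) + (‖G z‖₊ : ℝ≥0∞)) := by
      apply lintegral_mono
      intro z
      calc (‖G (z - h) - G z‖₊ : ℝ≥0∞) ≤ (‖G (z-h)‖₊ + ‖G z‖₊ : ℝ≥0) := by
            exact_mod_cast nnnorm_sub_le _ _
        _ = _ := by push_cast; ring
    refine this.trans ?_
    rw [lintegral_add_right _ (hGm.nnnorm.coe_nnreal_ennreal),
      lintegral_sub_right_eq_self (fun z => (‖G z‖₊ : ℝ≥0∞)) h, two_mul]
  have hφ_meas : Measurable φ := by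
    apply Measurable.lintegral_prod_right'
      (f := fun p : (EuclideanSpace ℝ (Fin n)) × (EuclideanSpace ℝ (Fin n)) =>
        (‖G (p.2 - p.1) - G p.2‖₊ : ℝ≥0∞))
    apply Measurable.coe_nnreal_ennreal
    apply Measurable.nnnorm
    exact (hGm.comp (measurable_snd.sub measurable_fst)).sub (hGm.comp measurable_snd)
  have hφ0 : Tendsto φ (𝓝 0) (𝓝 0) := tendsto_translate (heatKernel_integrable n)
  -- main bound for t > 0
  have hbound : ∀ t : ℝ, 0 < t →
      eLpNorm (fun x : EuclideanSpace ℝ (Fin n) =>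
          (∫ y, u₀ y * heatKernel n t (x - y)) - (∫ x, u₀ x) * heatKernel n t x) 1 volume
        ≤ ∫⁻ y, (‖u₀ y‖₊ : ℝ≥0∞) * φ ((Real.sqrt t)⁻¹ • y) := by
    intro t ht
    have hKc : Continuous (heatKernel n t) := heatKernel_continuous n t
    have hpt : ∀ x : EuclideanSpace ℝ (Fin n),
        (∫ y, u₀ y * heatKernel n t (x - y)) - (∫ x, u₀ x) * heatKernel n t x
          = ∫ y, u₀ y * (heatKernel n t (x - y) - heatKernel n t x) := by
      intro x
      have hint1' : Integrable (fun y => heatKernel n t (x - y) * u₀ y) := by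
        apply Integrable.bdd_mul (c := (4 * Real.pi * t) ^ (-(n : ℝ) / 2)) hu₀
        · exact ((hKc.comp (continuous_const.sub continuous_id)).aestronglyMeasurable)
        · filter_upwards with y
          rw [Real.norm_eq_abs, abs_of_nonneg (heatKernel_nonneg n ht _)]
          exact heatKernel_le n ht _
      have hint1 : Integrable (fun y => u₀ y * heatKernel n t (x - y)) :=
        hint1'.congr (Filter.Eventually.of_forall fun y => mul_comm _ _)
      have hint2 : Integrable (fun y => u₀ y * heatKernel n t x) := hu₀.mul_const _
      rw [eq_comm]
      simp_rw [mul_sub]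
      rw [integral_sub hint1 hint2, integral_mul_const]
    simp_rw [hpt]
    rw [eLpNorm_one_eq_lintegral_enorm]
    have step1 : ∫⁻ x, (‖∫ y, u₀ y * (heatKernel n t (x - y) - heatKernel n t x)‖₊ : ℝ≥0∞) ∂volume
        ≤ ∫⁻ x, ∫⁻ y, (‖u₀ y‖₊ : ℝ≥0∞) *
            (‖heatKernel n t (x - y) - heatKernel n t x‖₊ : ℝ≥0∞) ∂volume ∂volume := by
      apply lintegral_mono
      intro x
      calc (‖∫ y, u₀ y * (heatKernel n t (x - y) - heatKernel n t x)‖₊ : ℝ≥0∞)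
          ≤ ∫⁻ y, (‖u₀ y * (heatKernel n t (x - y) - heatKernel n t x)‖₊ : ℝ≥0∞) :=
            enorm_integral_le_lintegral_enorm _
        _ = ∫⁻ y, (‖u₀ y‖₊ : ℝ≥0∞) * (‖heatKernel n t (x - y) - heatKernel n t x‖₊ : ℝ≥0∞) := by
            simp_rw [nnnorm_mul, ENNReal.coe_mul]
    refine step1.trans ?_
    have hjm : Measurable (fun p : (EuclideanSpace ℝ (Fin n)) × (EuclideanSpace ℝ (Fin n)) =>
        (‖u₀ p.2‖₊ : ℝ≥0∞) * (‖heatKernel n t (p.1 - p.2) - heatKernel n t p.1‖₊ : ℝ≥0∞)) := by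
      apply Measurable.mul (f := fun p : (EuclideanSpace ℝ (Fin n)) × (EuclideanSpace ℝ (Fin n)) => (‖u₀ p.2‖₊ : ℝ≥0∞))
        (g := fun p : (EuclideanSpace ℝ (Fin n)) × (EuclideanSpace ℝ (Fin n)) => (‖heatKernel n t (p.1 - p.2) - heatKernel n t p.1‖₊ : ℝ≥0∞))
      · exact (hmeas.comp measurable_snd).nnnorm.coe_nnreal_ennreal
      · apply Measurable.coe_nnreal_ennreal
        apply Measurable.nnnorm
        exact ((hKc.measurable.comp (measurable_fst.sub measurable_snd)).sub
          (hKc.measurable.comp measurable_fst))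
    rw [lintegral_lintegral_swap hjm.aemeasurable]
    apply le_of_eq
    apply lintegral_congr
    intro y
    rw [lintegral_const_mul' _ _ ENNReal.coe_ne_top, key_cov n ht y]
  -- dominated convergence
  have hΦ : Tendsto (fun t : ℝ => ∫⁻ y, (‖u₀ y‖₊ : ℝ≥0∞) * φ ((Real.sqrt t)⁻¹ • y)) atTop
      (𝓝 0) := by
    have h0' : (0 : ℝ≥0∞) = ∫⁻ _ : EuclideanSpace ℝ (Fin n), 0 := by simp
    rw [h0']
    apply tendsto_lintegral_filter_of_dominated_convergence
      (bound := fun y => (‖u₀ y‖₊ : ℝ≥0∞) * (2 * C))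
    · filter_upwards with t
      exact hmeas.nnnorm.coe_nnreal_ennreal.mul
        (hφ_meas.comp (measurable_const_smul _))
    · filter_upwards with t
      filter_upwards with y
      exact mul_le_mul_right (hφ_le _) _
    · rw [lintegral_mul_const' _ _ (by finiteness)]
      exact ENNReal.mul_ne_top hu₀.hasFiniteIntegral.ne (by finiteness)
    · filter_upwards with y
      have hsq : Tendsto (fun t : ℝ => (Real.sqrt t)⁻¹ • y) atTop (𝓝 0) := by
        have h1 : Tendsto Real.sqrt atTop atTop := by
          apply (tendsto_rpow_atTop (y := (1/2 : ℝ)) (by norm_num)).congr'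
          filter_upwards [eventually_ge_atTop (0:ℝ)] with x hx
          rw [← Real.sqrt_eq_rpow]
        have h2 : Tendsto (fun t : ℝ => (Real.sqrt t)⁻¹) atTop (𝓝 0) :=
          tendsto_inv_atTop_zero.comp h1
        have h3 := h2.smul_const y
        rwa [zero_smul] at h3
      have := ENNReal.Tendsto.const_mul (a := ((‖u₀ y‖₊ : ℝ≥0) : ℝ≥0∞)) (hφ0.comp hsq)
        (Or.inr ENNReal.coe_ne_top)
      simpa using this
  refine tendsto_of_tendsto_of_tendsto_of_le_of_le' tendsto_const_nhds hΦ ?_ ?_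
  · filter_upwards with t; exact zero_le
  · filter_upwards [eventually_gt_atTop (0:ℝ)] with t ht
    exact hbound t ht

/-- For `u₀ ∈ L¹(ℝⁿ)` with mass `M = ∫ u₀`, the solution `u₀ * G_t` of the heat
equation satisfies `‖u₀ * G_t − M · G_t‖_{L¹} → 0` as `t → ∞`. -/
theorem heat_asymptotics_L1 (n : ℕ) (hn : 1 ≤ n)
    (u₀ : EuclideanSpace ℝ (Fin n) → ℝ) (hu₀ : Integrable u₀) :
    Tendsto
      (fun t : ℝ =>
        eLpNorm
          (fun x : EuclideanSpace ℝ (Fin n) =>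
            (∫ y, u₀ y * heatKernel n t (x - y)) - (∫ x, u₀ x) * heatKernel n t x)
          1 volume)
      atTop (nhds 0) := by
  obtain ⟨g, hgm, hgae⟩ := hu₀.aestronglyMeasurable
  have hg : Integrable g := hu₀.congr hgae
  have hkey : ∀ (t : ℝ) (x : EuclideanSpace ℝ (Fin n)),
      (∫ y, u₀ y * heatKernel n t (x - y)) = ∫ y, g y * heatKernel n t (x - y) := by
    intro t x
    apply integral_congr_ae
    filter_upwards [hgae] with y hy
    rw [hy]
  have hM : (∫ x, u₀ x) = ∫ x, g x := integral_congr_ae hgae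
  simp_rw [hkey, hM]
  exact heat_asymptotics_L1_aux n g hg hgm.measurable
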